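/- Let μ : ℕ → (0,∞). Define Δ_r(s) = μ(r+s)/μ(r) − μ(r+s−1)/μ(r−1) for integers r ≥ 1, s ≥ 0, and define H_α(β,k) for α ≥ 1, 1 ≤ k ≤ β by the recursion H_α(β,β) = Δ_α(β)·μ(0) for β ≥ 1, and H_α(β,k) = Δ_α(k)·μ(β−k) + Σ_{l=1}^{β−k} Δ_α(l)·H_l(β−l,k) for β ≥ 2 and 1 ≤ k ≤ β−1. Then for all β ≥ 2 and 1 ≤ k ≤ β−1, Σ_{l=1}^{β−k} μ(l)·H_l(β−l,k) = μ(0)·μ(β) − μ(k)·μ(β−k). -/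

import Mathlib

open Finset

section Aux
variable (μ : ℕ → ℝ) (Δ : ℕ → ℕ → ℝ)

noncomputable def Wf : ℕ → ℕ → ℕ → ℕ → ℝ
  | 0, _, _, _ => 0
  | n+1, a, q, j => μ q * (if a = j then 1 else 0)
      + ∑ l ∈ Finset.Icc 1 q, Δ a l * Wf n l (q - l) j

noncomputable def Wk (a q j : ℕ) : ℝ := Wf μ Δ (q+1) a q j

lemma Wf_indep : ∀ q n m a j, q < n → q < m → Wf μ Δ n a q j = Wf μ Δ m a q j := by
  intro q
  induction q using Nat.strong_induction_on with
  | _ q ih =>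
    intro n m a j hn hm
    match n, m with
    | n+1, m+1 =>
      simp only [Wf]
      congr 1
      refine Finset.sum_congr rfl fun l hl => ?_
      simp only [Finset.mem_Icc] at hl
      rw [ih (q - l) (by omega) n m l j (by omega) (by omega)]

lemma Wk_rec (a q j : ℕ) : Wk μ Δ a q j = μ q * (if a = j then 1 else 0)
    + ∑ l ∈ Finset.Icc 1 q, Δ a l * Wk μ Δ l (q - l) j := by
  show Wf μ Δ (q+1) a q j = _
  simp only [Wf]
  congr 1
  refine Finset.sum_congr rfl fun l hl => ?_
  simp only [Finset.mem_Icc] at hl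
  rw [Wf_indep μ Δ (q - l) q (q - l + 1) l j (by omega) (by omega)]
  rfl

lemma Wk_support : ∀ q a j, a < j → q < j → Wk μ Δ a q j = 0 := by
  intro q
  induction q using Nat.strong_induction_on with
  | _ q ih =>
    intro a j haj hqj
    rw [Wk_rec, if_neg (by omega), mul_zero, zero_add]
    refine Finset.sum_eq_zero fun l hl => ?_
    simp only [Finset.mem_Icc] at hl
    rw [ih (q - l) (by omega) l j (by omega) (by omega), mul_zero]

lemma Wk_gt (a q j : ℕ) (h : q < j) :
    Wk μ Δ a q j = μ q * (if a = j then 1 else 0) := by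
  rw [Wk_rec]
  rw [Finset.sum_eq_zero fun l hl => ?_, add_zero]
  simp only [Finset.mem_Icc] at hl
  rw [Wk_support μ Δ (q - l) l j (by omega) (by omega), mul_zero]

lemma Wk_sum_ext (a q' j N : ℕ) (hq : q' ≤ N) :
    ∑ i ∈ Icc 1 N, Wk μ Δ a q' i * Δ i j
      = (∑ i ∈ Icc 1 q', Wk μ Δ a q' i * Δ i j)
        + (if q' < a ∧ a ≤ N then μ q' * Δ a j else 0) := by
  have hsplit : ∑ i ∈ Icc 1 N, Wk μ Δ a q' i * Δ i j
      = (∑ i ∈ Icc 1 q', Wk μ Δ a q' i * Δ i j)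
        + ∑ i ∈ Ioc q' N, Wk μ Δ a q' i * Δ i j := by
    rw [show (Icc 1 N) = Ioc 0 N by rw [← Finset.Icc_add_one_left_eq_Ioc]; rfl,
        show (Icc 1 q') = Ioc 0 q' by rw [← Finset.Icc_add_one_left_eq_Ioc]; rfl]
    exact (Finset.sum_Ioc_consecutive _ (Nat.zero_le q') hq).symm
  rw [hsplit]
  congr 1
  rw [Finset.sum_congr rfl (g := fun i => if a = i then μ q' * Δ i j else 0)
    (fun i hi => by
      simp only [Finset.mem_Ioc] at hi
      rw [Wk_gt μ Δ a q' i hi.1]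
      by_cases h : a = i <;> simp [h] <;> ring)]
  rw [Finset.sum_ite_eq]
  simp [Finset.mem_Ioc]

lemma Wk_dual : ∀ q a j, 1 ≤ a → 1 ≤ j → j ≤ q →
    Wk μ Δ a q j = μ q * (if a = j then 1 else 0)
      + ∑ i ∈ Icc 1 (a + q), Wk μ Δ a (q - j) i * Δ i j := by
  intro q
  induction q using Nat.strong_induction_on with
  | _ q ih =>
    intro a j ha hj hjq
    rw [Wk_rec]
    congr 1
    have hpt : ∀ l ∈ Icc 1 q, Δ a l * Wk μ Δ l (q-l) j
        = Δ a l * (μ (q-l) * (if l = j then 1 else 0))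
          + (if l ≤ q - j then
              Δ a l * ∑ i ∈ Icc 1 q, Wk μ Δ l ((q-j) - l) i * Δ i j else 0) := by
      intro l hl; simp only [mem_Icc] at hl
      by_cases hc : l ≤ q - j
      · rw [if_pos hc, ih (q-l) (by omega) l j hl.1 hj (by omega),
            show l + (q-l) = q by omega, show (q-l)-j = (q-j)-l by omega]
        ring
      · rw [if_neg hc, add_zero, Wk_gt μ Δ l (q-l) j (by omega)]
    rw [Finset.sum_congr rfl hpt, Finset.sum_add_distrib]
    have h1 : ∑ l ∈ Icc 1 q, Δ a l * (μ (q-l) * (if l = j then 1 else 0))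
        = Δ a j * μ (q-j) := by
      rw [Finset.sum_congr rfl (g := fun l => if l = j then Δ a l * μ (q-l) else 0)
        (fun l _ => by by_cases h : l = j <;> simp [h]),
        Finset.sum_ite_eq', if_pos (by simp only [mem_Icc]; omega)]
    have h2 : (∑ l ∈ Icc 1 q, if l ≤ q - j then
          Δ a l * ∑ i ∈ Icc 1 q, Wk μ Δ l ((q-j) - l) i * Δ i j else 0)
        = ∑ l ∈ Icc 1 (q-j), Δ a l * ∑ i ∈ Icc 1 q, Wk μ Δ l ((q-j) - l) i * Δ i j := by
      rw [← Finset.sum_subset (Finset.Icc_subset_Icc_right (show q-j ≤ q by omega))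
        (fun x hx hnx => by
          simp only [Finset.mem_Icc] at hx hnx
          rw [if_neg (by omega)])]
      exact Finset.sum_congr rfl (fun l hl => by
        simp only [Finset.mem_Icc] at hl
        rw [if_pos hl.2])
    have h3 : ∑ l ∈ Icc 1 (q-j), Δ a l * ∑ i ∈ Icc 1 q, Wk μ Δ l ((q-j) - l) i * Δ i j
        = ∑ i ∈ Icc 1 q, (∑ l ∈ Icc 1 (q-j), Δ a l * Wk μ Δ l ((q-j)-l) i) * Δ i j := by
      simp_rw [Finset.mul_sum, Finset.sum_mul, mul_assoc]
      exact Finset.sum_comm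
    have h4 : ∀ i, (∑ l ∈ Icc 1 (q-j), Δ a l * Wk μ Δ l ((q-j)-l) i)
        = Wk μ Δ a (q-j) i - μ (q-j) * (if a = i then 1 else 0) := fun i => by
      rw [Wk_rec μ Δ a (q-j) i]; ring
    rw [h1, h2, h3]
    simp_rw [h4, sub_mul, Finset.sum_sub_distrib]
    have h5 : ∑ i ∈ Icc 1 q, μ (q-j) * (if a = i then 1 else 0) * Δ i j
        = if 1 ≤ a ∧ a ≤ q then μ (q-j) * Δ a j else 0 := by
      rw [Finset.sum_congr rfl (g := fun i => if a = i then μ (q-j) * Δ i j else 0)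
        (fun i _ => by by_cases h : a = i <;> simp [h]),
        Finset.sum_ite_eq]
      simp [Finset.mem_Icc]
    rw [h5, Wk_sum_ext μ Δ a (q-j) j q (by omega),
        Wk_sum_ext μ Δ a (q-j) j (a+q) (by omega)]
    have haq : (q - j < a ∧ a ≤ a + q) ↔ q - j < a := by omega
    by_cases hA : q - j < a <;> by_cases hB : a ≤ q
    · rw [if_pos (by omega : q-j < a ∧ a ≤ q), if_pos (by exact ⟨ha, hB⟩),
          if_pos (by omega : q-j < a ∧ a ≤ a+q)]
      ring
    · rw [if_neg (by omega : ¬(q-j < a ∧ a ≤ q)), if_neg (by omega : ¬(1 ≤ a ∧ a ≤ q)),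
          if_pos (by omega : q-j < a ∧ a ≤ a+q)]
      ring
    · rw [if_neg (by omega : ¬(q-j < a ∧ a ≤ q)), if_pos (⟨ha, hB⟩),
          if_neg (by omega : ¬(q-j < a ∧ a ≤ a+q))]
      ring
    · omega

lemma tel (hΔ : ∀ r s : ℕ, 1 ≤ r →
      Δ r s = μ (r + s) / μ r - μ (r + s - 1) / μ (r - 1))
    (j : ℕ) : ∀ p, ∑ i ∈ Icc 1 p, Δ i j = μ (p + j) / μ p - μ j / μ 0 := by
  intro p
  induction p with
  | zero => simp
  | succ p ihp =>
    rw [Finset.sum_Icc_succ_top (by omega : 1 ≤ p + 1), ihp, hΔ (p+1) j (by omega)]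
    have e1 : p + 1 + j - 1 = p + j := by omega
    have e2 : p + 1 - 1 = p := by omega
    rw [e1, e2]
    ring

lemma Ssum (hμ : ∀ n : ℕ, 0 < μ n)
    (hΔ : ∀ r s : ℕ, 1 ≤ r →
      Δ r s = μ (r + s) / μ r - μ (r + s - 1) / μ (r - 1)) :
    ∀ m j, 1 ≤ j → j ≤ m →
      ∑ l ∈ Icc 1 m, μ l * Wk μ Δ l (m - l) j = μ 0 * μ m := by
  intro m
  induction m using Nat.strong_induction_on with
  | _ m ih =>
    intro j hj hjm
    have hpt : ∀ l ∈ Icc 1 m, μ l * Wk μ Δ l (m-l) j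
        = (if l = j then μ l * μ (m-l) else 0)
          + (if l ≤ m - j then
              μ l * ∑ i ∈ Icc 1 m, Wk μ Δ l ((m-j) - l) i * Δ i j else 0) := by
      intro l hl; simp only [mem_Icc] at hl
      by_cases hc : l ≤ m - j
      · rw [if_pos hc, Wk_dual μ Δ (m-l) l j hl.1 hj (by omega),
            show l + (m-l) = m by omega, show (m-l)-j = (m-j)-l by omega]
        by_cases h : l = j <;> simp [h] <;> ring
      · rw [if_neg hc, add_zero, Wk_gt μ Δ l (m-l) j (by omega)]
        by_cases h : l = j <;> simp [h] <;> ring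
    rw [Finset.sum_congr rfl hpt, Finset.sum_add_distrib]
    have h1 : ∑ l ∈ Icc 1 m, (if l = j then μ l * μ (m-l) else 0) = μ j * μ (m-j) := by
      rw [Finset.sum_ite_eq', if_pos (by simp only [mem_Icc]; omega)]
    have h2 : (∑ l ∈ Icc 1 m, if l ≤ m - j then
          μ l * ∑ i ∈ Icc 1 m, Wk μ Δ l ((m-j) - l) i * Δ i j else 0)
        = ∑ l ∈ Icc 1 (m-j), μ l * ∑ i ∈ Icc 1 m, Wk μ Δ l ((m-j) - l) i * Δ i j := by
      rw [← Finset.sum_subset (Finset.Icc_subset_Icc_right (show m-j ≤ m by omega))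
        (fun x hx hnx => by
          simp only [Finset.mem_Icc] at hx hnx
          rw [if_neg (by omega)])]
      exact Finset.sum_congr rfl (fun l hl => by
        simp only [Finset.mem_Icc] at hl
        rw [if_pos hl.2])
    have h3 : ∑ l ∈ Icc 1 (m-j), μ l * ∑ i ∈ Icc 1 m, Wk μ Δ l ((m-j) - l) i * Δ i j
        = ∑ i ∈ Icc 1 m, (∑ l ∈ Icc 1 (m-j), μ l * Wk μ Δ l ((m-j)-l) i) * Δ i j := by
      simp_rw [Finset.mul_sum, Finset.sum_mul, mul_assoc]
      exact Finset.sum_comm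
    have h4 : ∀ i ∈ Icc 1 m, (∑ l ∈ Icc 1 (m-j), μ l * Wk μ Δ l ((m-j)-l) i) * Δ i j
        = (if i ≤ m - j then μ 0 * μ (m-j) * Δ i j else 0) := by
      intro i hi; simp only [mem_Icc] at hi
      by_cases hc : i ≤ m - j
      · rw [if_pos hc, ih (m-j) (by omega) i hi.1 hc]
      · rw [if_neg hc, Finset.sum_eq_zero, zero_mul]
        intro l hl; simp only [mem_Icc] at hl
        rw [Wk_support μ Δ ((m-j)-l) l i (by omega) (by omega), mul_zero]
    have h5 : (∑ i ∈ Icc 1 m, if i ≤ m - j then μ 0 * μ (m-j) * Δ i j else 0)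
        = μ 0 * μ (m-j) * ∑ i ∈ Icc 1 (m-j), Δ i j := by
      rw [← Finset.sum_subset (Finset.Icc_subset_Icc_right (show m-j ≤ m by omega))
        (fun x hx hnx => by
          simp only [Finset.mem_Icc] at hx hnx
          rw [if_neg (by omega)]), Finset.mul_sum]
      exact Finset.sum_congr rfl (fun l hl => by
        simp only [Finset.mem_Icc] at hl
        rw [if_pos hl.2])
    rw [h1, h2, h3, Finset.sum_congr rfl h4, h5, tel μ Δ hΔ j (m-j),
        show m - j + j = m by omega]
    have hm0 : μ (m-j) ≠ 0 := (hμ _).ne'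
    have h00 : μ 0 ≠ 0 := (hμ _).ne'
    field_simp
    ring

lemma H_eq (H : ℕ → ℕ → ℕ → ℝ)
    (hHdiag : ∀ α β : ℕ, 1 ≤ α → 1 ≤ β → H α β β = Δ α β * μ 0)
    (hHrec : ∀ α β k : ℕ, 1 ≤ α → 2 ≤ β → 1 ≤ k → k ≤ β - 1 →
      H α β k = Δ α k * μ (β - k)
        + ∑ l ∈ Finset.Icc 1 (β - k), Δ α l * H l (β - l) k) :
    ∀ q a k N, 1 ≤ a → 1 ≤ k → a ≤ N → q ≤ N →
      H a (k + q) k = ∑ j ∈ Icc 1 N, Wk μ Δ a q j * Δ j k := by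
  intro q
  induction q using Nat.strong_induction_on with
  | _ q ih =>
    intro a k N ha hk haN hqN
    rcases Nat.eq_zero_or_pos q with h0 | hq
    · subst h0
      rw [Nat.add_zero, hHdiag a k ha hk]
      have hW0 : ∀ j, Wk μ Δ a 0 j = μ 0 * (if a = j then 1 else 0) := fun j => by
        rw [Wk_rec]; simp
      rw [Finset.sum_congr rfl (fun j _ => by rw [hW0 j]),
          Finset.sum_congr rfl (g := fun j => if a = j then μ 0 * Δ j k else 0)
            (fun j _ => by by_cases h : a = j <;> simp [h]),
          Finset.sum_ite_eq, if_pos (by simp only [mem_Icc]; omega)]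
      ring
    · rw [hHrec a (k+q) k ha (by omega) hk (by omega), show k + q - k = q by omega]
      have hpt : ∀ l ∈ Icc 1 q, Δ a l * H l (k + q - l) k
          = Δ a l * ∑ j ∈ Icc 1 N, Wk μ Δ l (q - l) j * Δ j k := by
        intro l hl; simp only [mem_Icc] at hl
        rw [show k + q - l = k + (q - l) by omega,
            ih (q - l) (by omega) l k N hl.1 hk (by omega) (by omega)]
      rw [Finset.sum_congr rfl hpt]
      have h3 : ∑ l ∈ Icc 1 q, Δ a l * ∑ j ∈ Icc 1 N, Wk μ Δ l (q-l) j * Δ j k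
          = ∑ j ∈ Icc 1 N, (∑ l ∈ Icc 1 q, Δ a l * Wk μ Δ l (q-l) j) * Δ j k := by
        simp_rw [Finset.mul_sum, Finset.sum_mul, mul_assoc]
        exact Finset.sum_comm
      have h4 : ∀ j, (∑ l ∈ Icc 1 q, Δ a l * Wk μ Δ l (q-l) j)
          = Wk μ Δ a q j - μ q * (if a = j then 1 else 0) := fun j => by
        rw [Wk_rec μ Δ a q j]; ring
      rw [h3]
      simp_rw [h4, sub_mul, Finset.sum_sub_distrib]
      have h5 : ∑ j ∈ Icc 1 N, μ q * (if a = j then 1 else 0) * Δ j k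
          = μ q * Δ a k := by
        rw [Finset.sum_congr rfl (g := fun j => if a = j then μ q * Δ j k else 0)
          (fun j _ => by by_cases h : a = j <;> simp [h]),
          Finset.sum_ite_eq, if_pos (by simp only [mem_Icc]; omega)]
      rw [h5]
      ring

end Aux

/-- summation identity for the coefficients `H` of a
mass-migration target process. -/
theorem stmt7
    (μ : ℕ → ℝ) (hμ : ∀ n : ℕ, 0 < μ n)
    (Δ : ℕ → ℕ → ℝ)
    (hΔ : ∀ r s : ℕ, 1 ≤ r →
      Δ r s = μ (r + s) / μ r - μ (r + s - 1) / μ (r - 1))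
    (H : ℕ → ℕ → ℕ → ℝ)
    (hHdiag : ∀ α β : ℕ, 1 ≤ α → 1 ≤ β → H α β β = Δ α β * μ 0)
    (hHrec : ∀ α β k : ℕ, 1 ≤ α → 2 ≤ β → 1 ≤ k → k ≤ β - 1 →
      H α β k = Δ α k * μ (β - k)
        + ∑ l ∈ Finset.Icc 1 (β - k), Δ α l * H l (β - l) k) :
    ∀ β k : ℕ, 2 ≤ β → 1 ≤ k → k ≤ β - 1 →
      ∑ l ∈ Finset.Icc 1 (β - k), μ l * H l (β - l) k
        = μ 0 * μ β - μ k * μ (β - k) := by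
  intro β k hβ hk hkβ
  set m := β - k with hm
  have hm1 : 1 ≤ m := by omega
  have hpt : ∀ l ∈ Icc 1 m, μ l * H l (β - l) k
      = μ l * ∑ j ∈ Icc 1 m, Wk μ Δ l (m - l) j * Δ j k := by
    intro l hl; simp only [mem_Icc] at hl
    rw [show β - l = k + (m - l) by omega,
        H_eq μ Δ H hHdiag hHrec (m - l) l k m hl.1 hk hl.2 (by omega)]
  rw [Finset.sum_congr rfl hpt]
  have h3 : ∑ l ∈ Icc 1 m, μ l * ∑ j ∈ Icc 1 m, Wk μ Δ l (m-l) j * Δ j k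
      = ∑ j ∈ Icc 1 m, (∑ l ∈ Icc 1 m, μ l * Wk μ Δ l (m-l) j) * Δ j k := by
    simp_rw [Finset.mul_sum, Finset.sum_mul, mul_assoc]
    exact Finset.sum_comm
  rw [h3, Finset.sum_congr rfl (fun j hj => by
    simp only [mem_Icc] at hj
    rw [Ssum μ Δ hμ hΔ m j hj.1 hj.2]),
    ← Finset.mul_sum, tel μ Δ hΔ k m, show m + k = β by omega]
  have hm0 : μ m ≠ 0 := (hμ _).ne'
  have h00 : μ 0 ≠ 0 := (hμ _).ne'
  field_simp
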